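/- Let F be a field, V a finite type, E : V → V → Prop a directed graph, k ≥ 1, and x : V → F^k a vertex coding. For v ∈ V define the lifted blade x̄(v) = ι(x v, 0)·ι(0, x v) in the exterior algebra Λ(F^k × F^k). For a k-walk w, let X_w : Matrix (Fin k) (Fin k) F be the matrix whose j-th column is x(w j). Then Σ over all k-walks w of x̄(w 0)·x̄(w 1)⋯x̄(w (k−1)) = (−1)^{k(k−1)/2} ( Σ over all k-paths w of (det X_w)² ) • ( ι(e_1,0)⋯ι(e_k,0) · ι(0,e_1)⋯ι(0,e_k) ). -/

import Mathlib

open ExteriorAlgebra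

/-- A module-valued alternating map is determined by its value on a basis. -/
theorem alt_eq_det_smul {F : Type} [Field F] {M N : Type} [AddCommGroup M] [Module F M]
    [AddCommGroup N] [Module F N] {k : ℕ}
    (e : Module.Basis (Fin k) F M) (f : M [⋀^Fin k]→ₗ[F] N) (v : Fin k → M) :
    f v = e.det v • f e := by
  have h : f = (LinearMap.toSpanSingleton F N (f e)).compAlternatingMap e.det := by
    refine Module.Basis.ext_alternating e fun i h => ?_
    let σ : Equiv.Perm (Fin k) := Equiv.ofBijective i (Finite.injective_iff_bijective.1 h)
    have h1 : f (e ∘ σ) = Equiv.Perm.sign σ • f e := AlternatingMap.map_perm f e σ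
    have h2 : e.det (e ∘ σ) = Equiv.Perm.sign σ • (1 : F) := by
      rw [AlternatingMap.map_perm, Module.Basis.det_self]
    change f (e ∘ σ) = _
    rw [h1, LinearMap.compAlternatingMap_apply]
    show _ = e.det (e ∘ σ) • f ⇑e
    rw [h2]
    rcases Int.units_eq_one_or (Equiv.Perm.sign σ) with hs | hs <;> simp [hs]
  conv_lhs => rw [h]
  simp [LinearMap.toSpanSingleton_apply]

theorem prod_mul_anticomm {A : Type} [Ring A] (l : List A) (a : A)
    (h : ∀ x ∈ l, x * a = -(a * x)) :
    l.prod * a = ((-1 : ℤ) ^ l.length) • (a * l.prod) := by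
  induction l with
  | nil => simp
  | cons x t ih =>
    have hx := h x (List.mem_cons_self (a := x) (l := t))
    have ht := fun y hy => h y (List.mem_cons_of_mem x hy)
    rw [List.prod_cons, mul_assoc, ih ht, mul_smul_comm, ← mul_assoc, hx, List.length_cons,
      pow_succ]
    simp [mul_assoc, mul_smul]

theorem interleave_prod {A : Type} [Ring A] (k : ℕ) (a b : Fin k → A)
    (h : ∀ i j, b i * a j = -(a j * b i)) :
    (List.ofFn fun j => a j * b j).prod
      = ((-1 : ℤ) ^ (k * (k - 1) / 2)) • ((List.ofFn a).prod * (List.ofFn b).prod) := by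
  induction k with
  | zero => simp
  | succ n ih =>
    rw [List.ofFn_succ', List.ofFn_succ' (f := a), List.ofFn_succ' (f := b)]
    simp only [List.concat_eq_append, List.prod_append, List.prod_cons, List.prod_nil, mul_one]
    rw [ih (fun i => a i.castSucc) (fun i => b i.castSucc) (fun i j => h _ _)]
    have hb : (List.ofFn fun i : Fin n => b i.castSucc).prod * a (Fin.last n)
        = ((-1 : ℤ) ^ n) • (a (Fin.last n) * (List.ofFn fun i : Fin n => b i.castSucc).prod) := by
      have := prod_mul_anticomm (List.ofFn fun i : Fin n => b i.castSucc) (a (Fin.last n)) ?_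
      · simpa using this
      · intro y hy
        obtain ⟨i, rfl⟩ := List.mem_ofFn.1 hy
        exact h _ _
    have hpow : (n + 1) * (n + 1 - 1) / 2 = n * (n - 1) / 2 + n := by
      rw [← Nat.choose_two_right, ← Nat.choose_two_right, Nat.choose_succ_succ,
        Nat.choose_one_right, Nat.add_comm]
    rw [hpow, pow_add]
    calc ((-1 : ℤ) ^ (n * (n - 1) / 2)) • ((List.ofFn fun i : Fin n => a i.castSucc).prod *
            (List.ofFn fun i : Fin n => b i.castSucc).prod) * (a (Fin.last n) * b (Fin.last n))
        = ((-1 : ℤ) ^ (n * (n - 1) / 2)) • ((List.ofFn fun i : Fin n => a i.castSucc).prod *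
            ((List.ofFn fun i : Fin n => b i.castSucc).prod * a (Fin.last n)) * b (Fin.last n)) := by
          rw [smul_mul_assoc]; ring_nf
          rw [mul_assoc, mul_assoc, mul_assoc]
      _ = _ := by
          rw [hb, mul_smul_comm, smul_mul_assoc, smul_smul, mul_comm ((-1:ℤ)^(n*(n-1)/2))]
          congr 1
          rw [mul_assoc, mul_assoc, mul_assoc]

/-- The walk-sum of the lifted Bernoulli-style blades equals
`(-1)^{k(k-1)/2}` times the sum over `k`-paths of the squared determinants,
times the product of the lifted standard basis blades. -/
theorem lifted_walk_sum_eq_path_det_sq_sum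
    {F : Type} [Field F] (V : Type) [Fintype V] [DecidableEq V]
    (E : V → V → Prop) [DecidableRel E] (k : ℕ) (hk : 1 ≤ k)
    (x : V → (Fin k → F)) :
    ∑ w ∈ Finset.univ.filter
        (fun w : Fin k → V =>
          ∀ i j : Fin k, (j : ℕ) = (i : ℕ) + 1 → E (w i) (w j)),
      (List.ofFn (fun j : Fin k =>
        ExteriorAlgebra.ι F ((x (w j), 0) : (Fin k → F) × (Fin k → F)) *
          ExteriorAlgebra.ι F ((0, x (w j)) : (Fin k → F) × (Fin k → F)))).prod
    = ((-1 : F) ^ (k * (k - 1) / 2) *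
        ∑ w ∈ Finset.univ.filter
          (fun w : Fin k → V =>
            (∀ i j : Fin k, (j : ℕ) = (i : ℕ) + 1 → E (w i) (w j)) ∧
              Function.Injective w),
          (Matrix.det (Matrix.of fun i j : Fin k => x (w j) i)) ^ 2) •
        ((List.ofFn (fun i : Fin k =>
            ExteriorAlgebra.ι F ((Pi.single i (1 : F), 0) :
              (Fin k → F) × (Fin k → F)))).prod *
          (List.ofFn (fun i : Fin k =>
            ExteriorAlgebra.ι F ((0, Pi.single i (1 : F)) :
              (Fin k → F) × (Fin k → F)))).prod) := by
  classical
  set W := ((Fin k → F) × (Fin k → F))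
  set e := Pi.basisFun F (Fin k) with he
  set fL : (Fin k → F) [⋀^Fin k]→ₗ[F] ExteriorAlgebra F W :=
    (ιMulti F k).compLinearMap (LinearMap.inl F _ _) with hfL
  set fR : (Fin k → F) [⋀^Fin k]→ₗ[F] ExteriorAlgebra F W :=
    (ιMulti F k).compLinearMap (LinearMap.inr F _ _) with hfR
  set Pb := (List.ofFn fun i : Fin k =>
      ExteriorAlgebra.ι F ((Pi.single i (1 : F), 0) : W)).prod with hPb
  set Qb := (List.ofFn fun i : Fin k =>
      ExteriorAlgebra.ι F ((0, Pi.single i (1 : F)) : W)).prod with hQb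
  set d : (Fin k → V) → F :=
    fun w => Matrix.det (Matrix.of fun i j : Fin k => x (w j) i) with hd
  have hLe : fL ⇑e = Pb := by
    rw [hfL, AlternatingMap.compLinearMap_apply, ιMulti_apply, hPb]
    refine congrArg List.prod (congrArg List.ofFn (funext fun i => ?_))
    rw [he, Pi.basisFun_apply]; rfl
  have hRe : fR ⇑e = Qb := by
    rw [hfR, AlternatingMap.compLinearMap_apply, ιMulti_apply, hQb]
    refine congrArg List.prod (congrArg List.ofFn (funext fun i => ?_))
    rw [he, Pi.basisFun_apply]; rfl
  have hdet : ∀ v : Fin k → (Fin k → F),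
      e.det v = Matrix.det (Matrix.of fun i j : Fin k => v j i) := by
    intro v
    rw [he, Pi.basisFun_det]
    show Matrix.det (Matrix.of fun i j => v i j) = _
    rw [← Matrix.det_transpose]
    rfl
  have hanti : ∀ u v : W, ExteriorAlgebra.ι F v * ExteriorAlgebra.ι F u
      = -(ExteriorAlgebra.ι F u * ExteriorAlgebra.ι F v) := fun u v =>
    eq_neg_of_add_eq_zero_left (ExteriorAlgebra.ι_add_mul_swap v u)
  -- per-walk identity
  have hterm : ∀ w : Fin k → V,
      (List.ofFn (fun j : Fin k =>
        ExteriorAlgebra.ι F ((x (w j), 0) : W) *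
          ExteriorAlgebra.ι F ((0, x (w j)) : W))).prod
      = ((-1 : F) ^ (k * (k - 1) / 2) * d w ^ 2) • (Pb * Qb) := by
    intro w
    rw [interleave_prod k _ _ (fun i j => hanti _ _)]
    have h1 : (List.ofFn fun j : Fin k => ExteriorAlgebra.ι F ((x (w j), 0) : W)).prod
        = d w • Pb := by
      have : fL (fun j => x (w j))
          = (List.ofFn fun j : Fin k => ExteriorAlgebra.ι F ((x (w j), 0) : W)).prod := by
        rw [hfL, AlternatingMap.compLinearMap_apply, ιMulti_apply]; rfl
      rw [← this, alt_eq_det_smul e fL, hLe, hdet, hd]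
    have h2 : (List.ofFn fun j : Fin k => ExteriorAlgebra.ι F ((0, x (w j)) : W)).prod
        = d w • Qb := by
      have : fR (fun j => x (w j))
          = (List.ofFn fun j : Fin k => ExteriorAlgebra.ι F ((0, x (w j)) : W)).prod := by
        rw [hfR, AlternatingMap.compLinearMap_apply, ιMulti_apply]; rfl
      rw [← this, alt_eq_det_smul e fR, hRe, hdet, hd]
    rw [h1, h2, smul_mul_smul_comm, ← smul_assoc]
    congr 1
    show ((-1 : ℤ) ^ (k * (k - 1) / 2)) • (d w * d w) = _
    rw [← Int.cast_smul_eq_zsmul F, smul_eq_mul, sq]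
    push_cast
    ring
  rw [Finset.sum_congr rfl (fun w _ => hterm w), ← Finset.sum_smul]
  congr 1
  rw [← Finset.mul_sum]
  congr 1
  -- restrict walk sum to injective walks
  have hsub : (Finset.univ.filter
        (fun w : Fin k → V =>
          (∀ i j : Fin k, (j : ℕ) = (i : ℕ) + 1 → E (w i) (w j)) ∧ Function.Injective w))
      ⊆ (Finset.univ.filter
        (fun w : Fin k → V => ∀ i j : Fin k, (j : ℕ) = (i : ℕ) + 1 → E (w i) (w j))) := by
    intro w hw
    simp only [Finset.mem_filter, Finset.mem_univ, true_and] at *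
    exact hw.1
  have hzero : ∀ w ∈ (Finset.univ.filter
        (fun w : Fin k → V => ∀ i j : Fin k, (j : ℕ) = (i : ℕ) + 1 → E (w i) (w j))),
      w ∉ (Finset.univ.filter
        (fun w : Fin k → V =>
          (∀ i j : Fin k, (j : ℕ) = (i : ℕ) + 1 → E (w i) (w j)) ∧ Function.Injective w)) →
      d w ^ 2 = 0 := by
    intro w hw hw'
    simp only [Finset.mem_filter, Finset.mem_univ, true_and] at hw hw'
    have hninj : ¬ Function.Injective w := fun hi => hw' ⟨hw, hi⟩
    obtain ⟨i, j, hij, hne⟩ := Function.not_injective_iff.1 hninj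
    have h0 : d w = 0 := Matrix.det_zero_of_column_eq hne (fun m => by
      show x (w i) m = x (w j) m
      rw [hij])
    rw [h0, zero_pow]
    exact two_ne_zero
  exact (Finset.sum_subset hsub hzero).symm
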